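/- arXiv:1703.01059 — 2 statements merged into one kernel-verified Lean document; each statement's English description precedes it below -/
import Mathlib

section
/- A two-qubit state σ belongs to ACVENN if and only if S(σ) ≥ 1; that is, the conditional von Neumann entropy of UσU† is non-negative for every 4×4 unitary U if and only if the von Neumann entropy of σ is at least 1. -/
open Matrix Finset
open scoped Kronecker ComplexOrder Classical

noncomputable section

/-- A quantum state: positive semidefinite matrix of trace 1. -/
def IsState {n : ℕ} (ρ : Matrix (Fin n) (Fin n) ℂ) : Prop :=
  ρ.PosSemidef ∧ ρ.trace = 1

/-- Von Neumann entropy `S(ρ) = -∑ᵢ λᵢ log₂ λᵢ` over the eigenvalues of `ρ`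
(with the convention `0 · log₂ 0 = 0`, which holds since `Real.logb 2 0 = 0`). -/
noncomputable def vnEntropy {n : ℕ} (ρ : Matrix (Fin n) (Fin n) ℂ) : ℝ :=
  if h : ρ.IsHermitian then -∑ i, h.eigenvalues i * Real.logb 2 (h.eigenvalues i) else 0

/-- Reduced state `ρ_A`: partial trace over the second tensor factor,
using the ordered product basis `|00⟩,|01⟩,|10⟩,|11⟩`, i.e. `|ab⟩ ↦ 2a+b`. -/
def ptraceB (ρ : Matrix (Fin 4) (Fin 4) ℂ) : Matrix (Fin 2) (Fin 2) ℂ :=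
  Matrix.of fun i j => ∑ k : Fin 2,
    ρ ⟨2 * i.val + k.val, by omega⟩ ⟨2 * j.val + k.val, by omega⟩

/-- Reduced state `ρ_B`: partial trace over the first tensor factor. -/
def ptraceA (ρ : Matrix (Fin 4) (Fin 4) ℂ) : Matrix (Fin 2) (Fin 2) ℂ :=
  Matrix.of fun i j => ∑ k : Fin 2,
    ρ ⟨2 * k.val + i.val, by omega⟩ ⟨2 * k.val + j.val, by omega⟩

/-- Conditional von Neumann entropy `S(A|B) = S(ρ_AB) - S(ρ_A)`. -/
def condEntropy (ρ : Matrix (Fin 4) (Fin 4) ℂ) : ℝ :=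
  vnEntropy ρ - vnEntropy (ptraceB ρ)

/-- Rank-one projector `|v⟩⟨v|`. -/
def proj (v : Fin 4 → ℂ) : Matrix (Fin 4) (Fin 4) ℂ := Matrix.vecMulVec v (star v)

/-- The Bell basis `|φ⁺⟩, |φ⁻⟩, |ψ⁺⟩, |ψ⁻⟩`. -/
noncomputable def bell : Fin 4 → Fin 4 → ℂ :=
  ![![(Real.sqrt 2 : ℂ)⁻¹, 0, 0, (Real.sqrt 2 : ℂ)⁻¹],
    ![(Real.sqrt 2 : ℂ)⁻¹, 0, 0, -(Real.sqrt 2 : ℂ)⁻¹],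
    ![0, (Real.sqrt 2 : ℂ)⁻¹, (Real.sqrt 2 : ℂ)⁻¹, 0],
    ![0, (Real.sqrt 2 : ℂ)⁻¹, -(Real.sqrt 2 : ℂ)⁻¹, 0]]

/-- Kronecker product of two one-qubit matrices as a `4 × 4` matrix,
with the index identification `(a,b) ↦ 2a+b`. -/
def kron (A B : Matrix (Fin 2) (Fin 2) ℂ) : Matrix (Fin 4) (Fin 4) ℂ :=
  Matrix.reindex finProdFinEquiv finProdFinEquiv (A ⊗ₖ B)


section AuxACVENN
open Polynomial

lemma charpoly_conj {n : ℕ} (U M : Matrix (Fin n) (Fin n) ℂ) (h1 : U * Uᴴ = 1) :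
    (U * M * Uᴴ).charpoly = M.charpoly := by
  have hmap : ∀ (A B : Matrix (Fin n) (Fin n) ℂ),
      (A * B).map (C : ℂ →+* ℂ[X]) = A.map C * B.map C := fun A B => by
    simpa using Matrix.map_mul (M := A) (N := B) (f := (C : ℂ →+* ℂ[X]))
  have h1' : U.map (C : ℂ →+* ℂ[X]) * Uᴴ.map C = 1 := by
    rw [← hmap, h1]; simp
  have hcm : charmatrix (U * M * Uᴴ) =
      U.map (C : ℂ →+* ℂ[X]) * charmatrix M * Uᴴ.map C := by
    unfold Matrix.charmatrix
    rw [Matrix.mul_sub, Matrix.sub_mul]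
    congr 1
    · rw [← Matrix.scalar_commute (X : ℂ[X]) (Commute.all _) (U.map C), mul_assoc, h1']
      simp [RingHom.mapMatrix_apply]
    · simp [RingHom.mapMatrix_apply, hmap, mul_assoc]
  have hd : (U.map (C : ℂ →+* ℂ[X])).det * (Uᴴ.map C).det = 1 := by
    rw [← det_mul, h1']; simp
  rw [Matrix.charpoly, hcm, det_mul, det_mul]
  calc (U.map (C : ℂ →+* ℂ[X])).det * (charmatrix M).det * (Uᴴ.map C).det
      = (charmatrix M).det * ((U.map (C : ℂ →+* ℂ[X])).det * (Uᴴ.map C).det) := by ring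
    _ = M.charpoly := by rw [hd, mul_one]; rfl

lemma charpoly_diagonal' {n : ℕ} (d : Fin n → ℂ) :
    (Matrix.diagonal d).charpoly = ∏ i, (X - C (d i)) := by
  rw [Matrix.charpoly]
  have : charmatrix (Matrix.diagonal d) = Matrix.diagonal fun i => X - C (d i) := by
    ext i j
    by_cases h : i = j
    · subst h; simp [charmatrix_apply_eq]
    · simp [charmatrix_apply_ne _ _ _ h, Matrix.diagonal_apply_ne _ h]
  rw [this, det_diagonal]

lemma roots_charpoly_herm {n : ℕ} {A : Matrix (Fin n) (Fin n) ℂ} (hA : A.IsHermitian) :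
    A.charpoly.roots = Finset.univ.val.map (fun i => ((hA.eigenvalues i : ℝ) : ℂ)) := by
  have hU := (Matrix.mem_unitaryGroup_iff).mp (hA.eigenvectorUnitary).2
  conv_lhs => rw [hA.spectral_theorem]
  rw [Unitary.conjStarAlgAut_apply]
  rw [show (star (hA.eigenvectorUnitary : Matrix (Fin n) (Fin n) ℂ))
      = (hA.eigenvectorUnitary : Matrix (Fin n) (Fin n) ℂ)ᴴ from rfl,
    charpoly_conj _ _ hU]
  have h2 : (∏ i, (X - C ((hA.eigenvalues i : ℝ) : ℂ)))
      = ((Finset.univ.val.map fun i => ((hA.eigenvalues i : ℝ) : ℂ)).map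
          fun a => X - C a).prod := by
    rw [Multiset.map_map]; rfl
  rw [show (RCLike.ofReal ∘ hA.eigenvalues : Fin n → ℂ)
      = fun i => ((hA.eigenvalues i : ℝ) : ℂ) from rfl,
    charpoly_diagonal', h2, roots_multiset_prod_X_sub_C]

lemma sum_eig_conj {n : ℕ} {A U : Matrix (Fin n) (Fin n) ℂ} (hA : A.IsHermitian)
    (hU : U ∈ Matrix.unitaryGroup (Fin n) ℂ) (hB : (U * A * Uᴴ).IsHermitian) (f : ℝ → ℝ) :
    ∑ i, f (hB.eigenvalues i) = ∑ i, f (hA.eigenvalues i) := by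
  have hc : (U * A * Uᴴ).charpoly = A.charpoly :=
    charpoly_conj U A ((Matrix.mem_unitaryGroup_iff).mp hU)
  have h1 := (roots_charpoly_herm hB).symm.trans (hc ▸ roots_charpoly_herm hA)
  have h2 : Finset.univ.val.map hB.eigenvalues = Finset.univ.val.map hA.eigenvalues := by
    apply Multiset.map_injective Complex.ofReal_injective
    simpa [Multiset.map_map, Function.comp_def] using h1
  calc ∑ i, f (hB.eigenvalues i) = ((Finset.univ.val.map hB.eigenvalues).map f).sum := by
        rw [Multiset.map_map]; rfl
    _ = ((Finset.univ.val.map hA.eigenvalues).map f).sum := by rw [h2]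
    _ = _ := by rw [Multiset.map_map]; rfl


lemma ptraceB_trace (ρ : Matrix (Fin 4) (Fin 4) ℂ) : (ptraceB ρ).trace = ρ.trace := by
  simp [Matrix.trace, ptraceB, Fin.sum_univ_two, Fin.sum_univ_four, Matrix.diag]
  ring


lemma ptraceB_herm {ρ : Matrix (Fin 4) (Fin 4) ℂ} (h : ρ.IsHermitian) :
    (ptraceB ρ).IsHermitian := by
  ext i j
  simp only [Matrix.conjTranspose_apply, ptraceB, Matrix.of_apply, star_sum]
  exact Finset.sum_congr rfl fun k _ => h.apply _ _


lemma ptraceB_quad (ρ : Matrix (Fin 4) (Fin 4) ℂ) (x : Fin 2 → ℂ) :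
    dotProduct (star x) (ptraceB ρ *ᵥ x)
      = dotProduct (star ![x 0, 0, x 1, 0]) (ρ *ᵥ ![x 0, 0, x 1, 0])
      + dotProduct (star ![0, x 0, 0, x 1]) (ρ *ᵥ ![0, x 0, 0, x 1]) := by
  simp [dotProduct, Matrix.mulVec, ptraceB, Fin.sum_univ_two, Fin.sum_univ_four]
  ring


lemma ptraceB_state {ρ : Matrix (Fin 4) (Fin 4) ℂ} (h : IsState ρ) :
    IsState (ptraceB ρ) := by
  refine ⟨.of_dotProduct_mulVec_nonneg (ptraceB_herm h.1.1) fun x => ?_, by rw [ptraceB_trace, h.2]⟩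
  rw [ptraceB_quad]
  exact add_nonneg (h.1.dotProduct_mulVec_nonneg _) (h.1.dotProduct_mulVec_nonneg _)


lemma vnEntropy_eq {n : ℕ} {ρ : Matrix (Fin n) (Fin n) ℂ} (h : ρ.IsHermitian) :
    vnEntropy ρ = -∑ i, h.eigenvalues i * Real.logb 2 (h.eigenvalues i) := by
  rw [vnEntropy, dif_pos h]


lemma trace_eq_sum_eig {n : ℕ} {A : Matrix (Fin n) (Fin n) ℂ} (hA : A.IsHermitian) :
    A.trace = ∑ i, ((hA.eigenvalues i : ℝ) : ℂ) := by
  conv_lhs => rw [hA.spectral_theorem]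
  rw [Unitary.conjStarAlgAut_apply]
  rw [Matrix.trace_mul_cycle]
  rw [show star (hA.eigenvectorUnitary : Matrix (Fin n) (Fin n) ℂ) *
      (hA.eigenvectorUnitary : Matrix (Fin n) (Fin n) ℂ) = 1 from
    Unitary.coe_star_mul_self _, one_mul, Matrix.trace_diagonal]
  rfl


lemma vnEntropy_conj {n : ℕ} {A U : Matrix (Fin n) (Fin n) ℂ} (hA : A.IsHermitian)
    (hU : U ∈ Matrix.unitaryGroup (Fin n) ℂ) :
    vnEntropy (U * A * Uᴴ) = vnEntropy A := by
  have hB : (U * A * Uᴴ).IsHermitian := by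
    simp [Matrix.IsHermitian, Matrix.conjTranspose_mul, Matrix.mul_assoc, hA.eq]
  rw [vnEntropy_eq hA, vnEntropy_eq hB,
    sum_eig_conj hA hU hB (fun x => x * Real.logb 2 x)]

lemma xlogx_ge {x : ℝ} (hx : 0 ≤ x) : x - 1/2 - x * Real.log 2 ≤ x * Real.log x := by
  rcases eq_or_lt_of_le hx with h|h
  · rw [← h]; norm_num
  · have key := Real.log_le_sub_one_of_pos (show 0 < (2*x)⁻¹ by positivity)
    rw [Real.log_inv, Real.log_mul (by norm_num) (ne_of_gt h)] at key
    have h3 := mul_le_mul_of_nonneg_left key (le_of_lt h)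
    have h4 : x * (2*x)⁻¹ = 1/2 := by field_simp
    nlinarith


lemma qubit_entropy_le_one {ρ : Matrix (Fin 2) (Fin 2) ℂ} (h : IsState ρ) :
    vnEntropy ρ ≤ 1 := by
  have hH := h.1.1
  have ha : 0 ≤ hH.eigenvalues 0 := h.1.eigenvalues_nonneg 0
  have hb : 0 ≤ hH.eigenvalues 1 := h.1.eigenvalues_nonneg 1
  have hab : hH.eigenvalues 0 + hH.eigenvalues 1 = 1 := by
    have := (trace_eq_sum_eig hH).symm.trans h.2
    rw [Fin.sum_univ_two] at this
    exact_mod_cast this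
  have hlog2 : 0 < Real.log 2 := Real.log_pos (by norm_num)
  rw [vnEntropy_eq hH, Fin.sum_univ_two]
  set a := hH.eigenvalues 0; set b := hH.eigenvalues 1
  have h1 := xlogx_ge ha
  have h2 := xlogx_ge hb
  rw [Real.logb, Real.logb]
  have e : -(a * (Real.log a / Real.log 2) + b * (Real.log b / Real.log 2))
      = (-(a * Real.log a + b * Real.log b)) / Real.log 2 := by ring
  rw [e, div_le_one hlog2]
  nlinarith


lemma vnEntropy_half_id : vnEntropy ((2:ℂ)⁻¹ • (1 : Matrix (Fin 2) (Fin 2) ℂ)) = 1 := by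
  have hH : ((2:ℂ)⁻¹ • (1 : Matrix (Fin 2) (Fin 2) ℂ)).IsHermitian := by
    simp [Matrix.IsHermitian, Matrix.conjTranspose_smul]
  have htr : ((2:ℂ)⁻¹ • (1 : Matrix (Fin 2) (Fin 2) ℂ)).trace = 1 := by
    simp [Matrix.trace_smul]
  have hdet : ((2:ℂ)⁻¹ • (1 : Matrix (Fin 2) (Fin 2) ℂ)).det = 4⁻¹ := by
    rw [Matrix.det_smul]; norm_num
  have hab : hH.eigenvalues 0 + hH.eigenvalues 1 = 1 := by
    have := (trace_eq_sum_eig hH).symm.trans htr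
    rw [Fin.sum_univ_two] at this
    exact_mod_cast this
  have hmul : hH.eigenvalues 0 * hH.eigenvalues 1 = 4⁻¹ := by
    have := (hH.det_eq_prod_eigenvalues).symm.trans hdet
    rw [Fin.prod_univ_two] at this
    exact Complex.ofReal_injective (by push_cast; exact this)
  have ha : hH.eigenvalues 0 = 1/2 := by nlinarith
  have hb : hH.eigenvalues 1 = 1/2 := by nlinarith
  rw [vnEntropy_eq hH, Fin.sum_univ_two, ha, hb]
  have : Real.logb 2 (1/2) = -1 := by
    rw [one_div, Real.logb_inv, Real.logb_self_eq_one] <;> norm_num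
  rw [this]; ring

def Bmat : Matrix (Fin 4) (Fin 4) ℂ := Matrix.of fun p m => bell m p

lemma star_s : star ((Real.sqrt 2 : ℂ))⁻¹ = ((Real.sqrt 2 : ℂ))⁻¹ := by
  simp [Complex.star_def, Complex.conj_ofReal]


lemma s_sq : ((Real.sqrt 2 : ℂ))⁻¹ ^ 2 = 2⁻¹ := by
  rw [inv_pow, ← Complex.ofReal_pow, Real.sq_sqrt (by norm_num : (0:ℝ) ≤ 2)]
  norm_num


lemma Bmat_mem : Bmat ∈ Matrix.unitaryGroup (Fin 4) ℂ := by
  rw [Matrix.mem_unitaryGroup_iff]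
  ext i j
  fin_cases i <;> fin_cases j <;>
    simp [Bmat, bell, Matrix.mul_apply, Fin.sum_univ_four, Matrix.conjTranspose_apply,
      star_s, Matrix.one_apply, Matrix.vecHead, Matrix.vecTail] <;>
    ring_nf <;>
    norm_num [s_sq, ← Complex.ofReal_pow, Real.sq_sqrt]


lemma ptraceB_bell_diag (d : Fin 4 → ℂ) (hd : ∑ m, d m = 1) :
    ptraceB (Bmat * Matrix.diagonal d * Bmatᴴ) = (2:ℂ)⁻¹ • 1 := by
  have hd4 : d 0 + d 1 + d 2 + d 3 = 1 := by
    rw [← hd, Fin.sum_univ_four]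
  have hs2 := s_sq
  ext i j
  fin_cases i <;> fin_cases j <;>
    simp [ptraceB, Bmat, bell, Matrix.mul_apply, Fin.sum_univ_four, Fin.sum_univ_two,
      Matrix.conjTranspose_apply, star_s, Matrix.diagonal, Matrix.one_apply,
      Matrix.vecHead, Matrix.vecTail] <;>
    linear_combination (d 0 + d 1 + d 2 + d 3) * hs2 + 2⁻¹ * hd4

end AuxACVENN

/-- A two-qubit state `σ` belongs to ACVENN (the conditional von Neumann
entropy of `UσU†` is non-negative for every 4×4 unitary `U`) iff `S(σ) ≥ 1`. -/
theorem stmt_0 (σ : Matrix (Fin 4) (Fin 4) ℂ) (hσ : IsState σ) :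
    (∀ U ∈ Matrix.unitaryGroup (Fin 4) ℂ, 0 ≤ condEntropy (U * σ * Uᴴ)) ↔
      1 ≤ vnEntropy σ := by
  have hH := hσ.1.1
  constructor
  · intro hyp
    set V : Matrix (Fin 4) (Fin 4) ℂ := (hH.eigenvectorUnitary : Matrix (Fin 4) (Fin 4) ℂ)
      with hV
    have hVmem : V ∈ Matrix.unitaryGroup (Fin 4) ℂ := hH.eigenvectorUnitary.2
    set U : Matrix (Fin 4) (Fin 4) ℂ := Bmat * Vᴴ with hUdef
    have hUmem : U ∈ Matrix.unitaryGroup (Fin 4) ℂ := by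
      have : Vᴴ ∈ Matrix.unitaryGroup (Fin 4) ℂ := by
        rw [show Vᴴ = star V from rfl]
        exact Unitary.star_mem hVmem
      exact mul_mem Bmat_mem this
    set D : Matrix (Fin 4) (Fin 4) ℂ :=
      Matrix.diagonal (fun i => ((hH.eigenvalues i : ℝ) : ℂ)) with hD
    have hσspec : σ = V * D * Vᴴ := by
      have := hH.spectral_theorem
      rw [Unitary.conjStarAlgAut_apply] at this
      rw [← hV] at this
      exact this
    have hUU : U * σ * Uᴴ = Bmat * D * Bmatᴴ := by
      have hVV : Vᴴ * V = 1 := Unitary.coe_star_mul_self hH.eigenvectorUnitary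
      rw [hUdef, hσspec, Matrix.conjTranspose_mul, Matrix.conjTranspose_conjTranspose]
      calc Bmat * Vᴴ * (V * D * Vᴴ) * (V * Bmatᴴ)
          = Bmat * ((Vᴴ * V) * D * (Vᴴ * V)) * Bmatᴴ := by
            simp only [Matrix.mul_assoc]
        _ = Bmat * D * Bmatᴴ := by rw [hVV]; simp [Matrix.mul_assoc]
    have hdsum : ∑ m, (fun i => ((hH.eigenvalues i : ℝ) : ℂ)) m = 1 := by
      rw [← trace_eq_sum_eig hH, hσ.2]
    have hpt : ptraceB (U * σ * Uᴴ) = (2:ℂ)⁻¹ • 1 := by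
      rw [hUU, hD]
      exact ptraceB_bell_diag _ hdsum
    have h0 := hyp U hUmem
    rw [condEntropy, vnEntropy_conj hH hUmem, hpt, vnEntropy_half_id] at h0
    linarith
  · intro h1 U hU
    have hBstate : IsState (U * σ * Uᴴ) := by
      constructor
      · exact hσ.1.mul_mul_conjTranspose_same U
      · rw [Matrix.trace_mul_cycle,
          show Uᴴ * U = 1 from Matrix.mem_unitaryGroup_iff'.mp hU, one_mul, hσ.2]
    have hle := qubit_entropy_le_one (ptraceB_state hBstate)
    rw [condEntropy, vnEntropy_conj hH hU]
    linarith
end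
end

section
/- The set ACVENN is convex: if σ₁ and σ₂ are two-qubit states belonging to ACVENN and λ ∈ [0,1], then λσ₁ + (1−λ)σ₂ belongs to ACVENN. -/
open Matrix Finset
open scoped Kronecker ComplexOrder Classical

noncomputable section

namespace ACVENN

/-- the entropy summand `-(x log₂ x)` -/
def ent (x : ℝ) : ℝ := -(x * Real.logb 2 x)

lemma ent_eq : ent = (Real.log 2)⁻¹ • Real.negMulLog := by
  funext x
  simp only [ent, Real.negMulLog, Real.logb, Pi.smul_apply, smul_eq_mul, div_eq_mul_inv]
  ring

lemma concaveOn_ent : ConcaveOn ℝ (Set.Ici 0) ent := by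
  rw [ent_eq]
  exact Real.concaveOn_negMulLog.smul (by positivity)

lemma vnEntropy_eq {m : ℕ} {ρ : Matrix (Fin m) (Fin m) ℂ} (h : ρ.IsHermitian) :
    vnEntropy ρ = ∑ i, ent (h.eigenvalues i) := by
  rw [vnEntropy, dif_pos h, ← Finset.sum_neg_distrib]
  rfl

open Polynomial in
lemma charpoly_conj {m : ℕ} {U : Matrix (Fin m) (Fin m) ℂ} (A : Matrix (Fin m) (Fin m) ℂ)
    (hU : U ∈ Matrix.unitaryGroup (Fin m) ℂ) :
    (U * A * Uᴴ).charpoly = A.charpoly := by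
  have h1 : U * Uᴴ = 1 := by
    simpa [Matrix.star_eq_conjTranspose] using Matrix.mem_unitaryGroup_iff.mp hU
  have hmapone : (U * Uᴴ).map (C : ℂ →+* ℂ[X]) = 1 := by
    rw [h1]; exact Matrix.map_one _ (map_zero _) (map_one _)
  have key : charmatrix (U * A * Uᴴ) =
      U.map (C : ℂ →+* ℂ[X]) * charmatrix A * ((Uᴴ).map (C : ℂ →+* ℂ[X])) := by
    rw [charmatrix, charmatrix, Matrix.mul_sub, Matrix.sub_mul]
    congr 1
    · have hscalar : (Matrix.scalar (Fin m) (X : ℂ[X])) = (X : ℂ[X]) • (1 : Matrix (Fin m) (Fin m) ℂ[X]) := by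
        ext i j
        simp [Matrix.scalar, Matrix.smul_apply, Matrix.one_apply, Matrix.diagonal_apply]
      rw [hscalar, Matrix.mul_smul, Matrix.smul_mul, Matrix.mul_one, ← Matrix.map_mul, hmapone]
    · simp only [RingHom.mapMatrix_apply, ← Matrix.map_mul]
  rw [Matrix.charpoly, key, det_mul, det_mul, mul_comm, ← mul_assoc, ← det_mul, ← Matrix.map_mul]
  have h2 : (Uᴴ * U).map (C : ℂ →+* ℂ[X]) = 1 := by
    have : Uᴴ * U = 1 := by
      simpa [Matrix.star_eq_conjTranspose] using Matrix.mem_unitaryGroup_iff'.mp hU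
    rw [this]; exact Matrix.map_one _ (map_zero _) (map_one _)
  rw [h2, det_one, one_mul, Matrix.charpoly]

open Polynomial in
lemma charpoly_of_hermitian {m : ℕ} {A : Matrix (Fin m) (Fin m) ℂ} (hA : A.IsHermitian) :
    A.charpoly = ((Finset.univ.val.map (fun i => ((hA.eigenvalues i : ℝ) : ℂ))).map
      (fun a => X - C a)).prod := by
  have hV := (Matrix.IsHermitian.eigenvectorUnitary hA).2
  have hsp := hA.spectral_theorem
  rw [Unitary.conjStarAlgAut_apply] at hsp
  rw [Matrix.star_eq_conjTranspose] at hsp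
  change A = _ * Matrix.diagonal (fun i => (hA.eigenvalues i : ℂ)) * _ at hsp
  have : A.charpoly = (Matrix.diagonal (fun i => (hA.eigenvalues i : ℂ)) : Matrix (Fin m) (Fin m) ℂ).charpoly := by
    conv_lhs => rw [hsp]
    have := charpoly_conj (U := (Matrix.IsHermitian.eigenvectorUnitary hA : Matrix (Fin m) (Fin m) ℂ))
      (Matrix.diagonal (fun i => (hA.eigenvalues i : ℂ))) hV
    convert this using 3
  rw [this, Matrix.charpoly_of_upperTriangular _ (Matrix.blockTriangular_diagonal _)]
  rw [Multiset.map_map, ← Finset.prod_eq_multiset_prod]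
  exact Finset.prod_congr rfl fun i _ => by simp

open Polynomial in
lemma eig_multiset_conj {m : ℕ} {U A : Matrix (Fin m) (Fin m) ℂ}
    (hU : U ∈ Matrix.unitaryGroup (Fin m) ℂ) (hA : A.IsHermitian)
    (hB : (U * A * Uᴴ).IsHermitian) :
    Finset.univ.val.map hB.eigenvalues = Finset.univ.val.map hA.eigenvalues := by
  have hc : (U * A * Uᴴ).charpoly = A.charpoly := charpoly_conj A hU
  rw [charpoly_of_hermitian hA, charpoly_of_hermitian hB] at hc
  have hr := congrArg Polynomial.roots hc
  rw [Polynomial.roots_multiset_prod_X_sub_C, Polynomial.roots_multiset_prod_X_sub_C] at hr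
  have : Multiset.map (Complex.ofReal) (Finset.univ.val.map hB.eigenvalues)
      = Multiset.map (Complex.ofReal) (Finset.univ.val.map hA.eigenvalues) := by
    rw [Multiset.map_map, Multiset.map_map]
    exact hr
  exact Multiset.map_injective Complex.ofReal_injective this

lemma esum_conj {m : ℕ} (f : ℝ → ℝ) {U A : Matrix (Fin m) (Fin m) ℂ}
    (hU : U ∈ Matrix.unitaryGroup (Fin m) ℂ) (hA : A.IsHermitian)
    (hB : (U * A * Uᴴ).IsHermitian) :
    ∑ i, f (hB.eigenvalues i) = ∑ i, f (hA.eigenvalues i) := by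
  have h := congrArg (fun s => (Multiset.map f s).sum) (eig_multiset_conj hU hA hB)
  simpa [Multiset.map_map, Finset.sum, Function.comp_def] using h

lemma isHermitian_conj {m : ℕ} {U A : Matrix (Fin m) (Fin m) ℂ} (hA : A.IsHermitian) :
    (U * A * Uᴴ).IsHermitian := by
  have := Matrix.isHermitian_mul_mul_conjTranspose U hA
  exact this

lemma vnEntropy_conj {m : ℕ} {U A : Matrix (Fin m) (Fin m) ℂ}
    (hU : U ∈ Matrix.unitaryGroup (Fin m) ℂ) (hA : A.IsHermitian) :
    vnEntropy (U * A * Uᴴ) = vnEntropy A := by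
  have hB : (U * A * Uᴴ).IsHermitian := isHermitian_conj hA
  rw [vnEntropy_eq hA, vnEntropy_eq hB, esum_conj ent hU hA hB]

lemma diag_re_nonneg {m : ℕ} {M : Matrix (Fin m) (Fin m) ℂ} (hM : M.PosSemidef) (i : Fin m) :
    0 ≤ (M i i).re := by
  have := hM.re_dotProduct_nonneg (Pi.single i 1)
  simpa [Matrix.mulVec_single, dotProduct, Pi.single_apply] using this

lemma peierls {m : ℕ} {A : Matrix (Fin m) (Fin m) ℂ} (hA : A.PosSemidef)
    {V : Matrix (Fin m) (Fin m) ℂ} (hV : V ∈ Matrix.unitaryGroup (Fin m) ℂ) :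
    ∑ j, ent (hA.1.eigenvalues j) ≤ ∑ i, ent ((star V * A * V) i i).re := by
  set W : Matrix (Fin m) (Fin m) ℂ := (Matrix.IsHermitian.eigenvectorUnitary hA.1 : Matrix (Fin m) (Fin m) ℂ) with hW
  set eig : Fin m → ℝ := hA.1.eigenvalues with heig
  have hWU : W ∈ Matrix.unitaryGroup (Fin m) ℂ := (Matrix.IsHermitian.eigenvectorUnitary hA.1).2
  set Cm : Matrix (Fin m) (Fin m) ℂ := star W * V with hCm
  have hCU : Cm ∈ Matrix.unitaryGroup (Fin m) ℂ := mul_mem (Unitary.star_mem hWU) hV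
  set c : Fin m → Fin m → ℝ := fun j i => Complex.normSq (Cm j i) with hc
  -- the diagonalization
  have hsp : star V * A * V = star Cm * Matrix.diagonal (fun j => (eig j : ℂ)) * Cm := by
    have h1 : A = W * Matrix.diagonal (fun j => (eig j : ℂ)) * star W := by
      have := hA.1.spectral_theorem
      rw [Unitary.conjStarAlgAut_apply] at this
      change A = W * Matrix.diagonal (fun j => (eig j : ℂ)) * star W at this
      convert this using 2
    rw [h1, hCm, Matrix.star_mul, star_star]
    noncomm_ring
  -- diagonal entries
  have hentry : ∀ i, ((star V * A * V) i i).re = ∑ j, c j i * eig j := by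
    intro i
    rw [hsp]
    have : (star Cm * Matrix.diagonal (fun j => (eig j : ℂ)) * Cm) i i
        = ∑ j, (starRingEnd ℂ) (Cm j i) * ((eig j : ℂ) * Cm j i) := by
      rw [Matrix.mul_assoc, Matrix.mul_apply]
      congr 1
      ext j
      rw [Matrix.mul_apply]
      simp [Matrix.diagonal, Matrix.star_apply, Finset.mul_sum, Matrix.of_apply]
    rw [this, Complex.re_sum]
    refine Finset.sum_congr rfl fun j _ => ?_
    have h4 : (starRingEnd ℂ) (Cm j i) * ((eig j : ℂ) * Cm j i)
        = (eig j : ℂ) * (Cm j i * (starRingEnd ℂ) (Cm j i)) := by ring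
    rw [h4, Complex.mul_conj, ← Complex.ofReal_mul, Complex.ofReal_re]
    simp [hc, mul_comm]
  -- column sums
  have hcol : ∀ i, ∑ j, c j i = 1 := by
    intro i
    have h1 : star Cm * Cm = 1 := Matrix.mem_unitaryGroup_iff'.mp hCU
    have h2 := congrFun (congrFun h1 i) i
    rw [Matrix.mul_apply] at h2
    have h3 : ∑ j, (starRingEnd ℂ) (Cm j i) * Cm j i = 1 := by
      simpa [Matrix.star_apply, Matrix.one_apply] using h2
    have h4 : ((∑ j, c j i : ℝ) : ℂ) = 1 := by
      push_cast
      rw [← h3]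
      exact Finset.sum_congr rfl fun j _ => by rw [mul_comm, Complex.mul_conj, hc]
    exact_mod_cast h4
  -- row sums
  have hrow : ∀ j, ∑ i, c j i = 1 := by
    intro j
    have h1 : Cm * star Cm = 1 := Matrix.mem_unitaryGroup_iff.mp hCU
    have h2 := congrFun (congrFun h1 j) j
    rw [Matrix.mul_apply] at h2
    have h3 : ∑ i, Cm j i * (starRingEnd ℂ) (Cm j i) = 1 := by
      simpa [Matrix.star_apply, Matrix.one_apply] using h2
    have h4 : ((∑ i, c j i : ℝ) : ℂ) = 1 := by
      push_cast
      rw [← h3]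
      exact Finset.sum_congr rfl fun i _ => by rw [Complex.mul_conj, hc]
    exact_mod_cast h4
  -- Jensen
  have hnn : ∀ j, (0:ℝ) ≤ eig j := fun j => hA.eigenvalues_nonneg j
  have jensen : ∀ i, ∑ j, c j i * ent (eig j) ≤ ent (∑ j, c j i * eig j) := by
    intro i
    have := concaveOn_ent.le_map_sum (t := Finset.univ) (w := fun j => c j i) (p := eig)
      (fun j _ => Complex.normSq_nonneg _) (hcol i) (fun j _ => hnn j)
    simpa [smul_eq_mul] using this
  calc ∑ j, ent (eig j) = ∑ j, (∑ i, c j i) * ent (eig j) := by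
        refine Finset.sum_congr rfl fun j _ => by rw [hrow j, one_mul]
    _ = ∑ i, ∑ j, c j i * ent (eig j) := by
        rw [Finset.sum_comm]
        exact Finset.sum_congr rfl fun j _ => by rw [Finset.sum_mul]
    _ ≤ ∑ i, ent (∑ j, c j i * eig j) := Finset.sum_le_sum fun i _ => jensen i
    _ = ∑ i, ent ((star V * A * V) i i).re := by
        exact Finset.sum_congr rfl fun i _ => by rw [hentry i]

lemma posSemidef_smul {m : ℕ} {A : Matrix (Fin m) (Fin m) ℂ} (hA : A.PosSemidef)
    {l : ℝ} (hl : 0 ≤ l) : ((l:ℂ) • A).PosSemidef := by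
  refine Matrix.PosSemidef.of_dotProduct_mulVec_nonneg ?_ ?_
  · have : ((l:ℂ) • A)ᴴ = star (l:ℂ) • Aᴴ := Matrix.conjTranspose_smul _ _
    rw [Matrix.IsHermitian, this, hA.1]
    congr 1
    simp [Complex.conj_ofReal]
  · intro x
    rw [Matrix.smul_mulVec, dotProduct_smul]
    have h0 : (0:ℂ) ≤ (l:ℂ) := by exact_mod_cast Complex.zero_le_real.mpr hl
    exact mul_nonneg h0 (hA.dotProduct_mulVec_nonneg x)

lemma vnEntropy_concave {m : ℕ} {A B : Matrix (Fin m) (Fin m) ℂ}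
    (hA : A.PosSemidef) (hB : B.PosSemidef) {l : ℝ} (hl0 : 0 ≤ l) (hl1 : l ≤ 1) :
    l * vnEntropy A + (1 - l) * vnEntropy B ≤ vnEntropy ((l:ℂ) • A + ((1-l : ℝ):ℂ) • B) := by
  set ρ : Matrix (Fin m) (Fin m) ℂ := (l:ℂ) • A + ((1-l : ℝ):ℂ) • B with hρ
  have hρP : ρ.PosSemidef := (posSemidef_smul hA hl0).add (posSemidef_smul hB (by linarith))
  have hH : ρ.IsHermitian := hρP.1
  set V : Matrix (Fin m) (Fin m) ℂ := (Matrix.IsHermitian.eigenvectorUnitary hH : Matrix (Fin m) (Fin m) ℂ) with hV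
  have hVU : V ∈ Matrix.unitaryGroup (Fin m) ℂ := (Matrix.IsHermitian.eigenvectorUnitary hH).2
  have hdiag : star V * ρ * V = Matrix.diagonal (fun i => ((hH.eigenvalues i : ℝ) : ℂ)) := by
    have := hH.conjStarAlgAut_star_eigenvectorUnitary
    rw [Unitary.conjStarAlgAut_star_apply] at this
    change _ = Matrix.diagonal (fun i => ((hH.eigenvalues i : ℝ) : ℂ)) at this
    convert this using 2
  set a : Fin m → ℝ := fun i => ((star V * A * V) i i).re with ha
  set b : Fin m → ℝ := fun i => ((star V * B * V) i i).re with hb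
  have hsplit : ∀ i, hH.eigenvalues i = l * a i + (1 - l) * b i := by
    intro i
    have h1 : (star V * ρ * V) i i = ((hH.eigenvalues i : ℝ) : ℂ) := by
      rw [hdiag]; simp [Matrix.diagonal]
    have h2 : star V * ρ * V = (l:ℂ) • (star V * A * V) + ((1-l:ℝ):ℂ) • (star V * B * V) := by
      rw [hρ]
      rw [Matrix.mul_add, Matrix.add_mul]
      congr 1 <;> rw [Matrix.mul_smul, Matrix.smul_mul]
    have h3 := congrArg Complex.re h1
    rw [h2] at h3
    simp only [Matrix.add_apply, Matrix.smul_apply, smul_eq_mul, Complex.add_re,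
      Complex.re_ofReal_mul, Complex.ofReal_re] at h3
    rw [← h3]
  have hanneg : ∀ i, 0 ≤ a i := fun i =>
    diag_re_nonneg (hA.conjTranspose_mul_mul_same V) i
  have hbnneg : ∀ i, 0 ≤ b i := fun i =>
    diag_re_nonneg (hB.conjTranspose_mul_mul_same V) i
  have step1 : ∀ i, l * ent (a i) + (1 - l) * ent (b i) ≤ ent (hH.eigenvalues i) := by
    intro i
    rw [hsplit i]
    have := concaveOn_ent.2 (Set.mem_Ici.mpr (hanneg i)) (Set.mem_Ici.mpr (hbnneg i))
      hl0 (by linarith : (0:ℝ) ≤ 1 - l) (by ring)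
    simpa [smul_eq_mul] using this
  have hpA : ∑ j, ent (hA.1.eigenvalues j) ≤ ∑ i, ent (a i) := by
    have := peierls hA hVU
    simpa [ha] using this
  have hpB : ∑ j, ent (hB.1.eigenvalues j) ≤ ∑ i, ent (b i) := by
    have := peierls hB hVU
    simpa [hb] using this
  rw [vnEntropy_eq hA.1, vnEntropy_eq hB.1, vnEntropy_eq hH]
  calc l * ∑ j, ent (hA.1.eigenvalues j) + (1 - l) * ∑ j, ent (hB.1.eigenvalues j)
      ≤ l * ∑ i, ent (a i) + (1 - l) * ∑ i, ent (b i) := by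
        have := mul_le_mul_of_nonneg_left hpA hl0
        have := mul_le_mul_of_nonneg_left hpB (by linarith : (0:ℝ) ≤ 1 - l)
        gcongr
    _ = ∑ i, (l * ent (a i) + (1 - l) * ent (b i)) := by
        rw [Finset.sum_add_distrib, Finset.mul_sum, Finset.mul_sum]
    _ ≤ ∑ i, ent (hH.eigenvalues i) := Finset.sum_le_sum fun i _ => step1 i

lemma trace_eq_sum_eig {m : ℕ} {A : Matrix (Fin m) (Fin m) ℂ} (hA : A.IsHermitian) :
    A.trace = ((∑ i, hA.eigenvalues i : ℝ) : ℂ) := by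
  conv_lhs => rw [hA.spectral_theorem, Unitary.conjStarAlgAut_apply]
  rw [Matrix.trace_mul_cycle]
  have h1 : star (Matrix.IsHermitian.eigenvectorUnitary hA : Matrix (Fin m) (Fin m) ℂ)
      * (Matrix.IsHermitian.eigenvectorUnitary hA : Matrix (Fin m) (Fin m) ℂ) = 1 := by
    exact Matrix.mem_unitaryGroup_iff'.mp (Matrix.IsHermitian.eigenvectorUnitary hA).2
  rw [h1, Matrix.one_mul, Matrix.trace_diagonal]
  push_cast
  rfl

lemma sum_eig_eq_one {m : ℕ} {A : Matrix (Fin m) (Fin m) ℂ} (h : IsState A) :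
    ∑ i, h.1.1.eigenvalues i = 1 := by
  have h2 : ((∑ i, h.1.1.eigenvalues i : ℝ) : ℂ) = 1 := (trace_eq_sum_eig h.1.1).symm.trans h.2
  exact_mod_cast h2

lemma vnEntropy_le_one {ρ : Matrix (Fin 2) (Fin 2) ℂ} (h : IsState ρ) : vnEntropy ρ ≤ 1 := by
  have hH := h.1.1
  have hsum : hH.eigenvalues 0 + hH.eigenvalues 1 = 1 := by
    have := sum_eig_eq_one h
    rwa [Fin.sum_univ_two] at this
  rw [vnEntropy_eq hH, Fin.sum_univ_two]
  have h1 : hH.eigenvalues 1 = 1 - hH.eigenvalues 0 := by linarith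
  rw [h1]
  have hb : ent (hH.eigenvalues 0) + ent (1 - hH.eigenvalues 0)
      = Real.binEntropy (hH.eigenvalues 0) / Real.log 2 := by
    rw [Real.binEntropy_eq_negMulLog_add_negMulLog_one_sub, ent_eq]
    simp [div_eq_mul_inv, smul_eq_mul]
    ring
  rw [hb]
  rw [div_le_one (by positivity : (0:ℝ) < Real.log 2)]
  exact Real.binEntropy_le_log_two

lemma vnEntropy_half_one : vnEntropy ((2⁻¹ : ℂ) • (1 : Matrix (Fin 2) (Fin 2) ℂ)) = 1 := by
  have hH : ((2⁻¹ : ℂ) • (1 : Matrix (Fin 2) (Fin 2) ℂ)).IsHermitian := by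
    have : ((2⁻¹:ℝ):ℂ) = (2⁻¹:ℂ) := by norm_num
    rw [← this]
    exact (posSemidef_smul Matrix.PosSemidef.one (by norm_num)).1
  have heig : ∀ i, hH.eigenvalues i = 2⁻¹ := by
    intro i
    have hd := hH.conjStarAlgAut_star_eigenvectorUnitary
    rw [Unitary.conjStarAlgAut_star_apply] at hd
    have h1 : star (Matrix.IsHermitian.eigenvectorUnitary hH : Matrix (Fin 2) (Fin 2) ℂ)
        * (Matrix.IsHermitian.eigenvectorUnitary hH : Matrix (Fin 2) (Fin 2) ℂ) = 1 :=
      Matrix.mem_unitaryGroup_iff'.mp (Matrix.IsHermitian.eigenvectorUnitary hH).2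
    rw [Matrix.mul_smul, Matrix.mul_one, Matrix.smul_mul, h1] at hd
    have := congrFun (congrFun hd i) i
    simp only [Matrix.smul_apply, Matrix.one_apply_eq, smul_eq_mul, mul_one,
      Matrix.diagonal_apply_eq, Function.comp_apply] at this
    have h2 := this.symm
    have h3 : ((hH.eigenvalues i : ℝ) : ℂ) = ((2⁻¹ : ℝ) : ℂ) := by
      rw [show ((2⁻¹:ℝ):ℂ) = (2⁻¹:ℂ) by norm_num]
      exact h2
    exact Complex.ofReal_injective h3
  rw [vnEntropy_eq hH, Fin.sum_univ_two, heig, heig]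
  have : ent 2⁻¹ = 2⁻¹ := by
    rw [ent, Real.logb_inv, Real.logb_self_eq_one (by norm_num)]
    norm_num
  rw [this]; norm_num

lemma ptraceB_eq (ρ : Matrix (Fin 4) (Fin 4) ℂ) :
    ptraceB ρ = !![ρ 0 0 + ρ 1 1, ρ 0 2 + ρ 1 3; ρ 2 0 + ρ 3 1, ρ 2 2 + ρ 3 3] := by
  ext i j
  fin_cases i <;> fin_cases j <;> (simp [ptraceB, Fin.sum_univ_two]; try rfl)

lemma ptraceB_isHermitian {ρ : Matrix (Fin 4) (Fin 4) ℂ} (h : ρ.IsHermitian) :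
    (ptraceB ρ).IsHermitian := by
  have happ : ∀ a b, (starRingEnd ℂ) (ρ a b) = ρ b a := by
    intro a b
    have := congrFun (congrFun h b) a
    rw [Matrix.conjTranspose_apply] at this
    exact this
  rw [ptraceB_eq]
  ext i j
  fin_cases i <;> fin_cases j <;>
    simp [Matrix.conjTranspose_apply, happ]

lemma ptraceB_trace (ρ : Matrix (Fin 4) (Fin 4) ℂ) : (ptraceB ρ).trace = ρ.trace := by
  rw [ptraceB_eq]
  simp [Matrix.trace, Fin.sum_univ_four, Fin.sum_univ_two]
  ring

lemma ptraceB_posSemidef {ρ : Matrix (Fin 4) (Fin 4) ℂ} (h : ρ.PosSemidef) :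
    (ptraceB ρ).PosSemidef := by
  refine Matrix.PosSemidef.of_dotProduct_mulVec_nonneg (ptraceB_isHermitian h.1) fun x => ?_
  have key : star x ⬝ᵥ (ptraceB ρ) *ᵥ x
      = star (![x 0, 0, x 1, 0]) ⬝ᵥ ρ *ᵥ (![x 0, 0, x 1, 0])
      + star (![0, x 0, 0, x 1]) ⬝ᵥ ρ *ᵥ (![0, x 0, 0, x 1]) := by
    rw [ptraceB_eq]
    simp [dotProduct, Matrix.mulVec, Fin.sum_univ_four, Fin.sum_univ_two]
    ring
  rw [key]
  exact add_nonneg (h.dotProduct_mulVec_nonneg _) (h.dotProduct_mulVec_nonneg _)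

/-- integer Bell matrix -/
def Mb : Matrix (Fin 4) (Fin 4) ℂ := !![1,1,0,0; 0,0,1,1; 0,0,1,-1; 1,-1,0,0]

def Ubell : Matrix (Fin 4) (Fin 4) ℂ := ((Real.sqrt 2 : ℝ) : ℂ)⁻¹ • Mb

lemma hs2 : ((Real.sqrt 2 : ℝ) : ℂ)⁻¹ * ((Real.sqrt 2 : ℝ) : ℂ)⁻¹ = (2:ℂ)⁻¹ := by
  rw [← mul_inv, ← Complex.ofReal_mul]
  norm_num [Real.mul_self_sqrt]

lemma star_s : star ((Real.sqrt 2 : ℝ) : ℂ)⁻¹ = ((Real.sqrt 2 : ℝ) : ℂ)⁻¹ := by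
  rw [star_inv₀]
  simp [Complex.conj_ofReal]

lemma Mb_mul : Mbᴴ * Mb = (2:ℂ) • 1 := by
  ext i j
  fin_cases i <;> fin_cases j <;>
    simp [Mb, Matrix.mul_apply, Fin.sum_univ_four, Matrix.conjTranspose_apply, Matrix.one_apply] <;>
    norm_num

lemma Ubell_mem : Ubell ∈ Matrix.unitaryGroup (Fin 4) ℂ := by
  rw [Matrix.mem_unitaryGroup_iff']
  rw [Ubell, star_smul, Matrix.smul_mul, Matrix.mul_smul, star_s,
    Matrix.star_eq_conjTranspose, Mb_mul, smul_smul, smul_smul, hs2]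
  norm_num

lemma ptraceB_smul (c : ℂ) (ρ : Matrix (Fin 4) (Fin 4) ℂ) :
    ptraceB (c • ρ) = c • ptraceB ρ := by
  ext i j
  simp [ptraceB, Finset.mul_sum]
  ring

lemma ptraceB_MbD (d : Fin 4 → ℝ) (hd : ∑ i, d i = 1) :
    ptraceB (Mb * Matrix.diagonal (fun i => (d i : ℂ)) * Mbᴴ) = 1 := by
  have hdc : (d 0 : ℂ) + (d 1 : ℂ) + (d 2 : ℂ) + (d 3 : ℂ) = 1 := by
    rw [Fin.sum_univ_four] at hd
    exact_mod_cast congrArg (fun r : ℝ => (r : ℂ)) hd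
  rw [ptraceB_eq]
  ext i j
  fin_cases i <;> fin_cases j <;>
    simp [Mb, Matrix.mul_apply, Matrix.diagonal, Fin.sum_univ_four,
      Matrix.conjTranspose_apply, Matrix.one_apply, Matrix.vecHead, Matrix.vecTail,
      show Fin.succ 0 = (1:Fin 4) from rfl, show Fin.succ 1 = (2:Fin 4) from rfl,
      show Fin.succ 2 = (3:Fin 4) from rfl] <;>
    linear_combination hdc

lemma ptraceB_UbellD (d : Fin 4 → ℝ) (hd : ∑ i, d i = 1) :
    ptraceB (Ubell * Matrix.diagonal (fun i => (d i : ℂ)) * Ubellᴴ) = (2⁻¹:ℂ) • 1 := by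
  have h1 : Ubell * Matrix.diagonal (fun i => (d i : ℂ)) * Ubellᴴ
      = (2⁻¹:ℂ) • (Mb * Matrix.diagonal (fun i => (d i : ℂ)) * Mbᴴ) := by
    rw [Ubell, Matrix.conjTranspose_smul, Matrix.smul_mul, Matrix.smul_mul, Matrix.mul_smul,
      smul_smul]
    congr 1
    rw [← star_s, ← hs2]
    simp [Complex.conj_ofReal, mul_comm]
  rw [h1, ptraceB_smul, ptraceB_MbD d hd]

lemma one_le_vnEntropy_of {σ : Matrix (Fin 4) (Fin 4) ℂ} (hσ : IsState σ)
    (h : ∀ U ∈ Matrix.unitaryGroup (Fin 4) ℂ, 0 ≤ condEntropy (U * σ * Uᴴ)) :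
    1 ≤ vnEntropy σ := by
  have hH : σ.IsHermitian := hσ.1.1
  set V : Matrix (Fin 4) (Fin 4) ℂ := (Matrix.IsHermitian.eigenvectorUnitary hH : Matrix (Fin 4) (Fin 4) ℂ) with hV
  have hVU : V ∈ Matrix.unitaryGroup (Fin 4) ℂ := (Matrix.IsHermitian.eigenvectorUnitary hH).2
  set W : Matrix (Fin 4) (Fin 4) ℂ := Ubell * star V with hW
  have hWU : W ∈ Matrix.unitaryGroup (Fin 4) ℂ := mul_mem Ubell_mem (Unitary.star_mem hVU)
  have hdiag : star V * σ * V = Matrix.diagonal (fun i => ((hH.eigenvalues i : ℝ) : ℂ)) := by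
    have := hH.conjStarAlgAut_star_eigenvectorUnitary
    rw [Unitary.conjStarAlgAut_star_apply] at this
    change _ = Matrix.diagonal (fun i => ((hH.eigenvalues i : ℝ) : ℂ)) at this
    convert this using 2
  have hWσ : W * σ * Wᴴ
      = Ubell * Matrix.diagonal (fun i => ((hH.eigenvalues i : ℝ) : ℂ)) * Ubellᴴ := by
    rw [← hdiag, hW, ← Matrix.star_eq_conjTranspose, ← Matrix.star_eq_conjTranspose,
      Matrix.star_mul, star_star]
    noncomm_ring
  have hcond := h W hWU
  unfold condEntropy at hcond
  rw [vnEntropy_conj hWU hH] at hcond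
  rw [hWσ, ptraceB_UbellD _ (sum_eig_eq_one hσ), vnEntropy_half_one] at hcond
  linarith

end ACVENN

/-- ACVENN is convex. -/
theorem stmt_3 (σ₁ σ₂ : Matrix (Fin 4) (Fin 4) ℂ)
    (hσ₁ : IsState σ₁) (hσ₂ : IsState σ₂)
    (h₁ : ∀ U ∈ Matrix.unitaryGroup (Fin 4) ℂ, 0 ≤ condEntropy (U * σ₁ * Uᴴ))
    (h₂ : ∀ U ∈ Matrix.unitaryGroup (Fin 4) ℂ, 0 ≤ condEntropy (U * σ₂ * Uᴴ))
    (l : ℝ) (hl : l ∈ Set.Icc (0 : ℝ) 1) :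
    IsState ((l : ℂ) • σ₁ + ((1 - l : ℝ) : ℂ) • σ₂) ∧
    ∀ U ∈ Matrix.unitaryGroup (Fin 4) ℂ,
      0 ≤ condEntropy (U * ((l : ℂ) • σ₁ + ((1 - l : ℝ) : ℂ) • σ₂) * Uᴴ) := by
  obtain ⟨hl0, hl1⟩ := hl
  set ρ : Matrix (Fin 4) (Fin 4) ℂ := (l : ℂ) • σ₁ + ((1 - l : ℝ) : ℂ) • σ₂ with hρdef
  have hstate : IsState ρ := by
    constructor
    · exact (ACVENN.posSemidef_smul hσ₁.1 hl0).add (ACVENN.posSemidef_smul hσ₂.1 (by linarith))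
    · rw [hρdef, Matrix.trace_add, Matrix.trace_smul, Matrix.trace_smul, hσ₁.2, hσ₂.2]
      push_cast [smul_eq_mul]
      ring
  refine ⟨hstate, fun U hU => ?_⟩
  have hρH : ρ.IsHermitian := hstate.1.1
  have hUU : Uᴴ * U = 1 := by
    simpa [Matrix.star_eq_conjTranspose] using Matrix.mem_unitaryGroup_iff'.mp hU
  have hconjstate : IsState (U * ρ * Uᴴ) := by
    refine ⟨hstate.1.mul_mul_conjTranspose_same U, ?_⟩
    rw [Matrix.trace_mul_cycle, hUU, Matrix.one_mul]
    exact hstate.2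
  have hred : vnEntropy (ptraceB (U * ρ * Uᴴ)) ≤ 1 :=
    ACVENN.vnEntropy_le_one ⟨ACVENN.ptraceB_posSemidef hconjstate.1,
      (ACVENN.ptraceB_trace _).trans hconjstate.2⟩
  have hent : 1 ≤ vnEntropy (U * ρ * Uᴴ) := by
    rw [ACVENN.vnEntropy_conj hU hρH]
    have hA := ACVENN.one_le_vnEntropy_of hσ₁ h₁
    have hB := ACVENN.one_le_vnEntropy_of hσ₂ h₂
    have hc := ACVENN.vnEntropy_concave hσ₁.1 hσ₂.1 hl0 hl1
    have h1' : l * 1 ≤ l * vnEntropy σ₁ := mul_le_mul_of_nonneg_left hA hl0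
    have h2' : (1 - l) * 1 ≤ (1 - l) * vnEntropy σ₂ :=
      mul_le_mul_of_nonneg_left hB (by linarith)
    rw [← hρdef] at hc
    linarith
  unfold condEntropy
  linarith
end
end
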